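/- For every closed subset D of 𝕄, the set D* is a P_𝔟-set in 𝕄*: for every family of fewer than 𝔟 open subsets of 𝕄* each containing D*, D* is contained in the interior of the intersection of the family. -/

import Mathlib

open Set Topology Filter

noncomputable section

/-- The unit interval `[0,1] ⊆ ℝ`. -/
abbrev UnitI : Type := Set.Icc (0:ℝ) 1

/-- The space `𝕄 = ℕ × [0,1]`. -/
abbrev Mspace : Type := ℕ × UnitI

/-- `β𝕄`, the Stone–Čech compactification of `𝕄`. -/
abbrev betaM : Type := StoneCech Mspace

/-- The copy of `𝕄` inside `β𝕄`. -/
def Mcopy : Set betaM := Set.range (stoneCechUnit : Mspace → betaM)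

/-- `𝕄* = β𝕄 ∖ 𝕄`. -/
def MstarS : Set betaM := Mcopyᶜ

/-- `A* = cl_{β𝕄}(A) ∖ 𝕄` for `A ⊆ 𝕄`. -/
def mstar (A : Set Mspace) : Set betaM := closure (stoneCechUnit '' A) \ Mcopy

/-- Eventual domination `f ≤* g`: `f n ≤ g n` for all but finitely many `n`. -/
def EvDomLE (f g : ℕ → ℕ) : Prop := ∀ᶠ n in Filter.cofinite, f n ≤ g n

/-- The bounding number `𝔟`: the least cardinality of a `≤*`-unbounded family in `ℕ^ℕ`. -/
def frakb : Cardinal :=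
  sInf {c : Cardinal |
    ∃ F : Set (ℕ → ℕ), Cardinal.mk F = c ∧ ¬ ∃ g : ℕ → ℕ, ∀ f ∈ F, EvDomLE f g}

/-- `K` is a `P_κ`-set in `X`: for every family of fewer than `κ` open sets each
containing `K`, `K` is contained in the interior of the intersection of the family. -/
def IsPSet (κ : Cardinal) {X : Type} [TopologicalSpace X] (K : Set X) : Prop :=
  ∀ (ι : Type) (U : ι → Set X), Cardinal.mk ι < κ → (∀ i, IsOpen (U i)) → (∀ i, K ⊆ U i) →
    K ⊆ interior (⋂ i, U i)


/-- Disjoint closed sets in 𝕄 have disjoint closures in β𝕄. -/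
lemma disjoint_beta_closures {A B : Set Mspace} (hA : IsClosed A) (hB : IsClosed B)
    (hAB : Disjoint A B) :
    Disjoint (closure (stoneCechUnit '' A) : Set betaM) (closure (stoneCechUnit '' B)) := by
  obtain ⟨f, hf0, hf1, hf01⟩ := exists_continuous_zero_one_of_isClosed hA hB hAB
  have hgc : Continuous (fun p : Mspace => (⟨f p, hf01 p⟩ : UnitI)) :=
    (map_continuous f).subtype_mk _
  set F := stoneCechExtend hgc with hF
  have hFc : Continuous F := continuous_stoneCechExtend hgc
  have key : ∀ (S : Set Mspace) (c : UnitI), (∀ a ∈ S, f a = (c : ℝ)) →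
      closure (stoneCechUnit '' S) ⊆ F ⁻¹' {c} := by
    intro S c hc
    apply closure_minimal _ (isClosed_singleton.preimage hFc)
    rintro x ⟨a, ha, rfl⟩
    have h1 : F (stoneCechUnit a) = ⟨f a, hf01 a⟩ := congrFun (stoneCechExtend_extends hgc) a
    simp only [Set.mem_preimage, Set.mem_singleton_iff, h1]
    exact Subtype.ext (hc a ha)
  have h0 : closure (stoneCechUnit '' A) ⊆ F ⁻¹' {(⟨0, by norm_num⟩ : UnitI)} :=
    key A _ (fun a ha => hf0 ha)
  have h1 : closure (stoneCechUnit '' B) ⊆ F ⁻¹' {(⟨1, by norm_num⟩ : UnitI)} :=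
    key B _ (fun a ha => hf1 ha)
  refine Set.disjoint_left.mpr fun x hxA hxB => ?_
  have e0 := h0 hxA
  have e1 := h1 hxB
  simp only [Set.mem_preimage, Set.mem_singleton_iff] at e0 e1
  rw [e0] at e1
  exact absurd (congrArg Subtype.val e1) (by norm_num)

lemma col_compact (n : ℕ) : IsCompact ({p : Mspace | p.1 = n}) := by
  have : {p : Mspace | p.1 = n} = (fun y : UnitI => ((n, y) : Mspace)) '' Set.univ := by
    ext ⟨m, y⟩
    constructor
    · rintro (h : m = n); exact ⟨y, trivial, by simp [h]⟩
    · rintro ⟨z, -, h⟩; simp [← h]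
  rw [this]
  exact isCompact_univ.image (continuous_const.prodMk continuous_id)

lemma col_open (n : ℕ) : IsOpen ({p : Mspace | p.1 = n}) := by
  have : {p : Mspace | p.1 = n} = Prod.fst ⁻¹' {n} := rfl
  rw [this]
  exact (isOpen_discrete _).preimage continuous_fst

lemma isOpen_Mcopy : IsOpen Mcopy := by
  rw [isOpen_iff_forall_mem_open]
  rintro x ⟨m, rfl⟩
  classical
  set n := m.1 with hn
  have hc : Continuous (fun p : Mspace =>
      (if p.1 = n then (⟨0, by norm_num⟩ : UnitI) else ⟨1, by norm_num⟩)) := by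
    exact (continuous_of_discreteTopology
      (f := fun k : ℕ => if k = n then (⟨0, by norm_num⟩ : UnitI) else ⟨1, by norm_num⟩)).comp
      continuous_fst
  set F := stoneCechExtend hc with hF
  set Ω : Set betaM := F ⁻¹' {y : UnitI | (y : ℝ) < 1/2} with hΩ
  have hΩopen : IsOpen Ω :=
    (isOpen_lt continuous_subtype_val continuous_const).preimage (continuous_stoneCechExtend hc)
  have himg : Ω ∩ Mcopy ⊆ stoneCechUnit '' {p : Mspace | p.1 = n} := by
    rintro z ⟨hz, q, rfl⟩
    refine ⟨q, ?_, rfl⟩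
    have h1 : F (stoneCechUnit q) = _ := congrFun (stoneCechExtend_extends hc) q
    by_contra hq
    have hq' : ¬ q.1 = n := hq
    simp only [Set.mem_preimage, Set.mem_setOf_eq, hΩ, h1, if_neg hq'] at hz
    norm_num at hz
  have hclosed : IsClosed (stoneCechUnit '' {p : Mspace | p.1 = n}) :=
    ((col_compact n).image continuous_stoneCechUnit).isClosed
  have hsub : Ω ⊆ Mcopy := by
    intro z hz
    have h2 : z ∈ closure (Ω ∩ Mcopy) :=
      (denseRange_stoneCechUnit).open_subset_closure_inter hΩopen hz
    have h3 : z ∈ stoneCechUnit '' {p : Mspace | p.1 = n} :=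
      hclosed.closure_subset ((closure_mono himg) h2)
    exact ⟨h3.choose, h3.choose_spec.2⟩
  refine ⟨Ω, hsub, hΩopen, ?_⟩
  have h1 : F (stoneCechUnit m) = _ := congrFun (stoneCechExtend_extends hc) m
  simp only [hΩ, Set.mem_preimage, Set.mem_setOf_eq, h1, if_pos hn.symm.symm]
  rw [if_pos hn.symm]
  norm_num

/-- for every closed `D ⊆ 𝕄`, the set `D*` is a `P_𝔟`-set in `𝕄*`. -/
theorem closed_set_star_is_Pb_set (D : Set Mspace) (hD : IsClosed D) :
    IsPSet frakb {p : ↥MstarS | (p : betaM) ∈ mstar D} := by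
  intro ι U hcard hUopen hUK
  classical
  set u : Mspace → betaM := stoneCechUnit with hu
  have hMcl : IsClosed MstarS := isOpen_Mcopy.isClosed_compl
  set A : Set betaM := closure (u '' D) with hA
  set col : ℕ → Set Mspace := fun n => {p | p.1 = n} with hcol
  -- Step 1: good open sets V i in β𝕄
  have key : ∀ i, ∃ V : Set betaM, IsOpen V ∧ A ⊆ V ∧
      ∀ q : ↥MstarS, (q : betaM) ∈ closure V → q ∈ U i := by
    intro i
    obtain ⟨t, hto, htU⟩ := isOpen_induced_iff.mp (hUopen i)
    set B : Set betaM := MstarS ∩ tᶜ with hB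
    have hBcl : IsClosed B := hMcl.inter hto.isClosed_compl
    have hABd : Disjoint A B := by
      rw [Set.disjoint_left]
      rintro x hxA ⟨hxM, hxt⟩
      have hxK : (⟨x, hxM⟩ : ↥MstarS) ∈ {p : ↥MstarS | (p : betaM) ∈ mstar D} := ⟨hxA, hxM⟩
      have h2 := hUK i hxK
      rw [← htU] at h2
      exact hxt h2
    obtain ⟨V, W, hVo, hWo, hAV, hBW, hVW⟩ := normal_separation isClosed_closure hBcl hABd
    refine ⟨V, hVo, hAV, fun q hq => ?_⟩
    have hclW : closure V ⊆ Wᶜ :=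
      closure_minimal (fun y hy hyW => Set.disjoint_left.mp hVW hy hyW) hWo.isClosed_compl
    have hq' : (q : betaM) ∉ B := fun hqB => hclW hq (hBW hqB)
    have hqt : (q : betaM) ∈ t := by
      by_contra h
      exact hq' ⟨q.2, h⟩
    rw [← htU]
    exact hqt
  choose V hVo hAV hVU using key
  -- Step 2: the functions f i
  have hDO : ∀ i, D ⊆ u ⁻¹' (V i) := fun i p hp => hAV i (subset_closure ⟨p, hp, rfl⟩)
  have hf : ∀ i n, ∃ k : ℕ, 1 ≤ k ∧
      Metric.cthickening (1 / (k : ℝ)) (D ∩ col n) ⊆ u ⁻¹' (V i) := by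
    intro i n
    have hsub : D ∩ col n ⊆ u ⁻¹' (V i) := fun p hp => hDO i hp.1
    obtain ⟨ε, hεpos, hε⟩ := ((col_compact n).inter_left hD).exists_cthickening_subset_open
      ((hVo i).preimage continuous_stoneCechUnit) hsub
    obtain ⟨k, hk⟩ := exists_nat_gt (1 / ε)
    refine ⟨k + 1, le_add_self, (Metric.cthickening_mono ?_ _).trans hε⟩
    rw [div_le_iff₀ (by positivity)]
    rw [div_lt_iff₀ hεpos] at hk
    push_cast
    nlinarith [hεpos.le]
  choose f hf1 hfsub using hf
  -- Step 3: bound the family using 𝔟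
  have hbdd : ∃ g : ℕ → ℕ, ∀ i, EvDomLE (f i) g := by
    by_contra hcon
    push_neg at hcon
    have hmem : Cardinal.mk ↥(Set.range f) ∈ {c : Cardinal |
        ∃ F : Set (ℕ → ℕ), Cardinal.mk F = c ∧ ¬ ∃ g : ℕ → ℕ, ∀ f ∈ F, EvDomLE f g} := by
      refine ⟨Set.range f, rfl, ?_⟩
      rintro ⟨g, hg⟩
      obtain ⟨i, hi⟩ := hcon g
      exact hi (hg _ ⟨i, rfl⟩)
    have h1 : frakb ≤ Cardinal.mk ↥(Set.range f) := csInf_le' hmem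
    exact absurd hcard (not_lt.mpr (h1.trans Cardinal.mk_range_le))
  obtain ⟨g, hg⟩ := hbdd
  -- Step 4: the sets W and C
  set δ : ℕ → ℝ := fun n => 1 / (2 * (g n : ℝ) + 2) with hδ
  have hδpos : ∀ n, 0 < δ n := fun n => by positivity
  set C : Set Mspace := ⋃ n, (col n ∩ Metric.cthickening (δ n) (D ∩ col n)) with hC
  set W : Set Mspace := ⋃ n, (col n ∩ Metric.thickening (δ n) (D ∩ col n)) with hW
  have hWC : W ⊆ C := Set.iUnion_mono fun n =>
    Set.inter_subset_inter_right _ (Metric.thickening_subset_cthickening _ _)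
  have hWopen : IsOpen W := isOpen_iUnion fun n => (col_open n).inter Metric.isOpen_thickening
  have hDW : D ⊆ W := fun p hp =>
    Set.mem_iUnion.mpr ⟨p.1, rfl, Metric.self_subset_thickening (hδpos _) _ ⟨hp, rfl⟩⟩
  have hCclosed : IsClosed C := by
    rw [← isOpen_compl_iff, isOpen_iff_forall_mem_open]
    intro p hp
    refine ⟨col p.1 ∩ (Metric.cthickening (δ p.1) (D ∩ col p.1))ᶜ, ?_,
      (col_open p.1).inter Metric.isClosed_cthickening.isOpen_compl, rfl, ?_⟩
    · rintro q ⟨hq1, hq2⟩ hqC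
      obtain ⟨n, hqn, hqth⟩ := Set.mem_iUnion.mp hqC
      have : q.1 = n := hqn
      have : (n : ℕ) = q.1 := this.symm
      rw [this] at hqth
      have hq1' : (q.1 : ℕ) = p.1 := hq1
      rw [hq1'] at hqth
      exact hq2 hqth
    · intro hpth
      exact hp (Set.mem_iUnion.mpr ⟨p.1, rfl, hpth⟩)
  -- Step 5: the open set Ω in β𝕄
  set Ω : Set betaM := (closure (u '' Wᶜ))ᶜ with hΩ
  have hΩopen : IsOpen Ω := isClosed_closure.isOpen_compl
  have hAΩ : A ⊆ Ω := by
    have hd : Disjoint (closure (u '' D) : Set betaM) (closure (u '' Wᶜ)) :=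
      disjoint_beta_closures hD hWopen.isClosed_compl
        (Set.disjoint_left.mpr fun p hp hpc => hpc (hDW hp))
    exact fun x hx => Set.disjoint_left.mp hd hx
  -- Step 6: Ω ∩ 𝕄* ⊆ each U i
  have hΩU : ∀ (q : ↥MstarS), (q : betaM) ∈ Ω → ∀ i, q ∈ U i := by
    intro q hqΩ i
    have huniv : closure (u '' W) ∪ closure (u '' Wᶜ) = (Set.univ : Set betaM) := by
      rw [← closure_union, ← Set.image_union, Set.union_compl_self, Set.image_univ]
      exact denseRange_stoneCechUnit.closure_eq
    have hx1 : (q : betaM) ∈ closure (u '' W) := by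
      have : (q : betaM) ∈ closure (u '' W) ∪ closure (u '' Wᶜ) := by
        rw [huniv]; trivial
      rcases this with h | h
      · exact h
      · exact absurd h hqΩ
    have hx2 : (q : betaM) ∈ closure (u '' C) :=
      closure_mono (Set.image_mono hWC) hx1
    -- finite bad set
    have hS : {n : ℕ | ¬ f i n ≤ g n}.Finite := Filter.eventually_cofinite.mp (hg i)
    set K : Set Mspace := ⋃ n ∈ {n : ℕ | ¬ f i n ≤ g n}, col n with hK
    have hKcomp : IsCompact K := hS.isCompact_biUnion fun n _ => col_compact n
    have hCK : C \ K ⊆ u ⁻¹' (V i) := by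
      rintro p ⟨hpC, hpK⟩
      obtain ⟨n, hpn, hpth⟩ := Set.mem_iUnion.mp hpC
      have hng : f i n ≤ g n := by
        by_contra hbad
        exact hpK (Set.mem_biUnion hbad hpn)
      have hδle : δ n ≤ 1 / (f i n : ℝ) := by
        apply one_div_le_one_div_of_le
        · exact_mod_cast hf1 i n
        · have : (f i n : ℝ) ≤ (g n : ℝ) := by exact_mod_cast hng
          linarith
      exact hfsub i n (Metric.cthickening_mono hδle _ hpth)
    have hsplit : closure (u '' C) ⊆ closure (u '' (C \ K)) ∪ u '' (C ∩ K) := by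
      have himgcl : IsClosed (u '' (C ∩ K)) :=
        ((hKcomp.inter_left hCclosed).image continuous_stoneCechUnit).isClosed
      have : closure (u '' C) ⊆ closure (u '' (C \ K) ∪ u '' (C ∩ K)) := by
        apply closure_mono
        rw [← Set.image_union, Set.diff_union_inter]
      rw [closure_union, himgcl.closure_eq] at this
      exact this
    have hx3 : (q : betaM) ∈ closure (u '' (C \ K)) := by
      rcases hsplit hx2 with h | h
      · exact h
      · exact absurd (⟨h.choose, h.choose_spec.2⟩ : (q : betaM) ∈ Mcopy) q.2
    have hx4 : (q : betaM) ∈ closure (V i) := by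
      apply closure_mono _ hx3
      rintro x ⟨p, hp, rfl⟩
      exact hCK hp
    exact hVU i q hx4
  -- Step 7: conclude
  intro p hp
  have hpΩ : (p : betaM) ∈ Ω := hAΩ hp.1
  have hsub : (Subtype.val ⁻¹' Ω : Set ↥MstarS) ⊆ ⋂ i, U i := fun q hq =>
    Set.mem_iInter.mpr (hΩU q hq)
  exact interior_maximal hsub (hΩopen.preimage continuous_subtype_val) hpΩ
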